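/- The Hecke algebra generators T_i acting on polynomials satisfy the braid relation T_i T_{i+1} T_i = T_{i+1} T_i T_{i+1}, and T_i T_j = T_j T_i whenever |i − j| > 1. -/
import Mathlib


noncomputable section

open MvPolynomial

/-- The field of rational functions in the variables `x_1, …, x_N` over `K`. -/
abbrev FF (K : Type*) [Field K] (N : ℕ) := FractionRing (MvPolynomial (Fin N) K)

/-- The variable `x_i` viewed in the fraction field. -/
def XX {K : Type*} [Field K] {N : ℕ} (i : Fin N) : FF K N :=
  algebraMap (MvPolynomial (Fin N) K) (FF K N) (X i)

/-- A scalar `t ∈ K` viewed in the fraction field. -/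
def CC (K : Type*) [Field K] (N : ℕ) (t : K) : FF K N :=
  algebraMap (MvPolynomial (Fin N) K) (FF K N) (C t)

/-- The operator `K_{i,j}` exchanging the variables `x_i` and `x_j`, extended to
rational functions. -/
def swapVars {K : Type*} [Field K] {N : ℕ} (i j : Fin N) : FF K N →+* FF K N :=
  IsFractionRing.lift
    (g := (algebraMap (MvPolynomial (Fin N) K) (FF K N)).comp
      (rename (Equiv.swap i j)).toRingHom)
    (by
      exact (IsFractionRing.injective (MvPolynomial (Fin N) K) (FF K N)).comp
        (rename_injective _ (Equiv.swap i j).injective))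

/-- The Hecke algebra generator
`T_i f = t f + ((t x_i − x_{i+1})/(x_i − x_{i+1})) (K_{i,i+1} f − f)`
(here with general pair of indices `i`, `j` playing the roles of `i`, `i+1`). -/
def TOp {K : Type*} [Field K] {N : ℕ} (t : K) (i j : Fin N) (f : FF K N) : FF K N :=
  CC K N t * f + ((CC K N t * XX i - XX j) / (XX i - XX j)) * (swapVars i j f - f)

section Aux

variable {K : Type*} [Field K] {N : ℕ}

lemma swapVars_algebraMap (i j : Fin N) (p : MvPolynomial (Fin N) K) :
    swapVars i j (algebraMap _ (FF K N) p)
      = algebraMap _ (FF K N) (rename (Equiv.swap i j) p) := by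
  simp [swapVars, IsFractionRing.lift_algebraMap]

lemma swapVars_XX (i j k : Fin N) :
    swapVars i j (XX k : FF K N) = XX (Equiv.swap i j k) := by
  simp [XX, swapVars_algebraMap]

lemma swapVars_XX_left (i j : Fin N) : swapVars i j (XX i : FF K N) = XX j := by
  simp [swapVars_XX]

lemma swapVars_XX_right (i j : Fin N) : swapVars i j (XX j : FF K N) = XX i := by
  simp [swapVars_XX]

lemma swapVars_XX_of_ne {i j k : Fin N} (h1 : k ≠ i) (h2 : k ≠ j) :
    swapVars i j (XX k : FF K N) = XX k := by
  simp [swapVars_XX, Equiv.swap_apply_of_ne_of_ne h1 h2]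

lemma swapVars_CC (i j : Fin N) (t : K) : swapVars i j (CC K N t) = CC K N t := by
  simp [CC, swapVars_algebraMap]

lemma XX_ne {i j : Fin N} (h : i ≠ j) : (XX i : FF K N) ≠ XX j := by
  intro H
  exact h (X_injective (IsFractionRing.injective (MvPolynomial (Fin N) K) (FF K N) H))

lemma swapVars_perm_eq₂ {a b c d a' b' c' d' : Fin N}
    (h : (Equiv.swap a b * Equiv.swap c d : Equiv.Perm (Fin N))
       = Equiv.swap a' b' * Equiv.swap c' d') (f : FF K N) :
    swapVars a b (swapVars c d f) = swapVars a' b' (swapVars c' d' f) := by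
  have key : ((swapVars a b).comp (swapVars c d) : FF K N →+* FF K N)
      = (swapVars a' b').comp (swapVars c' d') := by
    apply IsLocalization.ringHom_ext (nonZeroDivisors (MvPolynomial (Fin N) K))
    ext p <;>
      simp only [RingHom.comp_apply, swapVars_algebraMap, rename_rename, rename_C,
        ← Equiv.Perm.coe_mul, h]
  exact RingHom.congr_fun key f

lemma swapVars_perm_eq₃ {a b c d e g a' b' c' d' e' g' : Fin N}
    (h : (Equiv.swap a b * (Equiv.swap c d * Equiv.swap e g) : Equiv.Perm (Fin N))
       = Equiv.swap a' b' * (Equiv.swap c' d' * Equiv.swap e' g')) (f : FF K N) :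
    swapVars a b (swapVars c d (swapVars e g f))
      = swapVars a' b' (swapVars c' d' (swapVars e' g' f)) := by
  have key : ((swapVars a b).comp ((swapVars c d).comp (swapVars e g)) : FF K N →+* FF K N)
      = (swapVars a' b').comp ((swapVars c' d').comp (swapVars e' g')) := by
    apply IsLocalization.ringHom_ext (nonZeroDivisors (MvPolynomial (Fin N) K))
    ext p <;>
      simp only [RingHom.comp_apply, swapVars_algebraMap, rename_rename, rename_C,
        ← Equiv.Perm.coe_mul, mul_assoc, h]
  exact RingHom.congr_fun key f

lemma swapVars_self (i j : Fin N) (f : FF K N) :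
    swapVars i j (swapVars i j f) = f := by
  have key : ((swapVars i j).comp (swapVars i j) : FF K N →+* FF K N) = RingHom.id _ := by
    apply IsLocalization.ringHom_ext (nonZeroDivisors (MvPolynomial (Fin N) K))
    ext p <;>
      simp [RingHom.comp_apply, swapVars_algebraMap, rename_rename, rename_C,
        ← Equiv.Perm.coe_mul]
  exact RingHom.congr_fun key f

lemma braid_swapVars {a b c : Fin N} (hab : a ≠ b) (hbc : b ≠ c) (hac : a ≠ c) (f : FF K N) :
    swapVars a b (swapVars b c (swapVars a b f))
      = swapVars b c (swapVars a b (swapVars b c f)) := by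
  apply swapVars_perm_eq₃
  rw [← mul_assoc, ← mul_assoc]
  rw [show Equiv.swap a b = Equiv.swap b a from Equiv.swap_comm a b,
      show Equiv.swap b c = Equiv.swap c b from Equiv.swap_comm b c]
  rw [Equiv.swap_mul_swap_mul_swap hbc.symm hac.symm]
  rw [show Equiv.swap c b = Equiv.swap b c from Equiv.swap_comm c b,
      show Equiv.swap b a = Equiv.swap a b from Equiv.swap_comm b a]
  rw [Equiv.swap_mul_swap_mul_swap hab hac]
  exact Equiv.swap_comm a c

lemma comm_swapVars {a b c d : Fin N} (hac : a ≠ c) (had : a ≠ d) (hbc : b ≠ c)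
    (hbd : b ≠ d) (f : FF K N) :
    swapVars a b (swapVars c d f) = swapVars c d (swapVars a b f) := by
  apply swapVars_perm_eq₂
  ext x
  simp only [Equiv.Perm.mul_apply, Equiv.swap_apply_def]
  split_ifs <;> simp_all

set_option maxHeartbeats 1000000 in
lemma braid_core {F : Type*} [Field F] (T x y z f f1 f2 f12 f21 f121 : F)
    (hxy : x - y ≠ 0) (hyz : y - z ≠ 0) (hxz : x - z ≠ 0)
    (hyx : y - x ≠ 0) (hzy : z - y ≠ 0) :
    (T*(T*(T*f + (T*x-y)/(x-y)*(f1-f)) + (T*y-z)/(y-z)*((T*f2 + (T*x-z)/(x-z)*(f21-f2)) - (T*f + (T*x-y)/(x-y)*(f1-f))))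
      + (T*x-y)/(x-y)*((T*(T*f1 + (T*y-x)/(y-x)*(f-f1)) + (T*x-z)/(x-z)*((T*f12 + (T*y-z)/(y-z)*(f121-f12)) - (T*f1 + (T*y-x)/(y-x)*(f-f1))))
        - (T*(T*f + (T*x-y)/(x-y)*(f1-f)) + (T*y-z)/(y-z)*((T*f2 + (T*x-z)/(x-z)*(f21-f2)) - (T*f + (T*x-y)/(x-y)*(f1-f))))))
    =
    (T*(T*(T*f + (T*y-z)/(y-z)*(f2-f)) + (T*x-y)/(x-y)*((T*f1 + (T*x-z)/(x-z)*(f12-f1)) - (T*f + (T*y-z)/(y-z)*(f2-f))))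
      + (T*y-z)/(y-z)*((T*(T*f2 + (T*z-y)/(z-y)*(f-f2)) + (T*x-z)/(x-z)*((T*f21 + (T*x-y)/(x-y)*(f121-f21)) - (T*f2 + (T*z-y)/(z-y)*(f-f2))))
        - (T*(T*f + (T*y-z)/(y-z)*(f2-f)) + (T*x-y)/(x-y)*((T*f1 + (T*x-z)/(x-z)*(f12-f1)) - (T*f + (T*y-z)/(y-z)*(f2-f)))))) := by
  set c1 := (T*x-y)/(x-y) with hc1
  set c2 := (T*y-z)/(y-z) with hc2
  set c3 := (T*x-z)/(x-z) with hc3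
  set d1 := (T*y-x)/(y-x) with hd1
  set d2 := (T*z-y)/(z-y) with hd2
  have hf2 : (T-c1)*c2*(T-c3) = (T-c2)*(T-c1)*c2 + c2*(T-c3)*(T-d2) := by
    rw [hc1, hc2, hc3, hd2]; field_simp; ring
  have hf1 : (T-c1)*(T-c2)*c1 + c1*(T-c3)*(T-d1) = (T-c2)*c1*(T-c3) := by
    rw [hc1, hc2, hc3, hd1]; field_simp; ring
  have hf : (T-c1)*(T-c2)*(T-c1) + c1*(T-c3)*d1
      = (T-c2)*(T-c1)*(T-c2) + c2*(T-c3)*d2 := by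
    rw [hc1, hc2, hc3, hd1, hd2]; field_simp; ring
  linear_combination f * hf + f1 * hf1 + f2 * hf2

set_option synthInstance.maxHeartbeats 1000000 in
set_option maxHeartbeats 4000000 in
lemma TOp_braid (t : K) {a b c : Fin N} (hab : a ≠ b) (hbc : b ≠ c) (hac : a ≠ c)
    (f : FF K N) :
    TOp t a b (TOp t b c (TOp t a b f)) = TOp t b c (TOp t a b (TOp t b c f)) := by
  have hxy : (XX a : FF K N) - XX b ≠ 0 := sub_ne_zero.mpr (XX_ne hab)
  have hyz : (XX b : FF K N) - XX c ≠ 0 := sub_ne_zero.mpr (XX_ne hbc)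
  have hxz : (XX a : FF K N) - XX c ≠ 0 := sub_ne_zero.mpr (XX_ne hac)
  have hyx : (XX b : FF K N) - XX a ≠ 0 := sub_ne_zero.mpr (XX_ne hab.symm)
  have hzy : (XX c : FF K N) - XX b ≠ 0 := sub_ne_zero.mpr (XX_ne hbc.symm)
  simp only [TOp, map_add, map_mul, map_sub, map_div₀, swapVars_CC,
    swapVars_XX_left, swapVars_XX_right,
    swapVars_XX_of_ne hac.symm hbc.symm, swapVars_XX_of_ne hab hac, swapVars_self]
  rw [braid_swapVars hab hbc hac f]
  linear_combination braid_core (CC K N t) (XX a) (XX b) (XX c) f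
    (swapVars a b f) (swapVars b c f) (swapVars a b (swapVars b c f))
    (swapVars b c (swapVars a b f)) (swapVars b c (swapVars a b (swapVars b c f)))
    hxy hyz hxz hyx hzy

set_option synthInstance.maxHeartbeats 1000000 in
set_option maxHeartbeats 4000000 in
lemma TOp_comm (t : K) {a b c d : Fin N} (hac : a ≠ c) (had : a ≠ d) (hbc : b ≠ c)
    (hbd : b ≠ d) (f : FF K N) :
    TOp t a b (TOp t c d f) = TOp t c d (TOp t a b f) := by
  simp only [TOp, map_add, map_mul, map_sub, map_div₀, swapVars_CC,
    swapVars_XX_of_ne hac had, swapVars_XX_of_ne hbc hbd,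
    swapVars_XX_of_ne hac.symm hbc.symm, swapVars_XX_of_ne had.symm hbd.symm,
    swapVars_self]
  rw [comm_swapVars hac had hbc hbd f]
  ring

end Aux

/- STATEMENT 1: The Hecke generators satisfy the braid relation
T_i T_{i+1} T_i = T_{i+1} T_i T_{i+1}, and T_i T_j = T_j T_i whenever |i − j| > 1. -/
theorem stmt1 {K : Type*} [Field K] {N : ℕ} (t : K) :
    (∀ (i : ℕ) (h : i + 2 < N) (f : FF K N),
      TOp t ⟨i, by omega⟩ ⟨i + 1, by omega⟩
        (TOp t ⟨i + 1, by omega⟩ ⟨i + 2, h⟩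
          (TOp t ⟨i, by omega⟩ ⟨i + 1, by omega⟩ f)) =
      TOp t ⟨i + 1, by omega⟩ ⟨i + 2, h⟩
        (TOp t ⟨i, by omega⟩ ⟨i + 1, by omega⟩
          (TOp t ⟨i + 1, by omega⟩ ⟨i + 2, h⟩ f))) ∧
    (∀ (i j : ℕ) (hi : i + 1 < N) (hj : j + 1 < N), 1 < |(i : ℤ) - (j : ℤ)| →
      ∀ f : FF K N,
        TOp t ⟨i, by omega⟩ ⟨i + 1, hi⟩ (TOp t ⟨j, by omega⟩ ⟨j + 1, hj⟩ f) =
        TOp t ⟨j, by omega⟩ ⟨j + 1, hj⟩ (TOp t ⟨i, by omega⟩ ⟨i + 1, hi⟩ f)) := by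
  constructor
  · intro i h f
    refine TOp_braid t ?_ ?_ ?_ f <;>
      (simp only [ne_eq, Fin.mk.injEq]; omega)
  · intro i j hi hj hij f
    have h' : 1 < (i : ℤ) - j ∨ 1 < -((i : ℤ) - j) := lt_abs.mp hij
    refine TOp_comm t ?_ ?_ ?_ ?_ f <;>
      (simp only [ne_eq, Fin.mk.injEq]; omega)

end
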